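/- Let d ≥ 3 and f ∈ C²([0,1]). Then the map s ↦ S_d[f](s) is differentiable on [0,1] with ‖(S_d f)'‖_∞ ≤ (c_{d+2}/d) ‖f'‖_∞. If additionally f'(0) = 0, then (S_d f)'(s) = (s/d) S_{d+2}[f''](s). -/

import Mathlib

open MeasureTheory Real Set

noncomputable def c (d : ℕ) : ℝ :=
  2 * Real.Gamma ((d : ℝ) / 2) / (Real.sqrt π * Real.Gamma (((d : ℝ) - 1) / 2))

noncomputable def rho (d : ℕ) (t : ℝ) : ℝ :=
  c d * (1 - t ^ 2) ^ (((d : ℝ) - 3) / 2)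

noncomputable def S (d : ℕ) (f : ℝ → ℝ) (s : ℝ) : ℝ :=
  ∫ t in (0:ℝ)..1, f (t * s) * rho d t

/-! Auxiliary lemmas -/

lemma c_pos {d : ℕ} (hd : 3 ≤ d) : 0 < c d := by
  have h3 : (3:ℝ) ≤ (d:ℝ) := by exact_mod_cast hd
  have h1 : 0 < Real.Gamma ((d:ℝ)/2) := Real.Gamma_pos_of_pos (by linarith)
  have h2 : 0 < Real.Gamma (((d:ℝ)-1)/2) := Real.Gamma_pos_of_pos (by linarith)
  have hpi : 0 < Real.sqrt π := Real.sqrt_pos.mpr Real.pi_pos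
  unfold c; positivity

lemma rho_cont {d : ℕ} (hd : 3 ≤ d) : Continuous (rho d) := by
  have h3 : (3:ℝ) ≤ (d:ℝ) := by exact_mod_cast hd
  have hk : 0 ≤ ((d:ℝ) - 3)/2 := by linarith
  unfold rho
  exact continuous_const.mul
    ((continuous_const.sub (continuous_pow 2)).rpow_const (fun t => Or.inr hk))

lemma rho_nonneg {d : ℕ} (hd : 3 ≤ d) {t : ℝ} (ht : t ∈ Icc (0:ℝ) 1) :
    0 ≤ rho d t := by
  have hb : 0 ≤ 1 - t^2 := by nlinarith [ht.1, ht.2]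
  exact mul_nonneg (c_pos hd).le (Real.rpow_nonneg hb _)

lemma mul_mem_Icc01 {t s : ℝ} (ht : t ∈ Icc (0:ℝ) 1) (hs : s ∈ Icc (0:ℝ) 1) :
    t * s ∈ Icc (0:ℝ) 1 :=
  ⟨mul_nonneg ht.1 hs.1, by nlinarith [ht.1, ht.2, hs.1, hs.2]⟩

/-- Antiderivative of `t * rho d t`. -/
lemma v_hasDeriv {d : ℕ} (hd : 3 ≤ d) (t : ℝ) :
    HasDerivAt (fun t : ℝ => -(c d / ((d:ℝ) - 1)) * (1 - t^2) ^ (((d:ℝ) - 1)/2))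
      (t * rho d t) t := by
  have h3 : (3:ℝ) ≤ (d:ℝ) := by exact_mod_cast hd
  have hp : 1 ≤ ((d:ℝ) - 1)/2 := by linarith
  have h1 : HasDerivAt (fun t : ℝ => 1 - t^2) (-(2*t)) t := by
    simpa using ((hasDerivAt_pow 2 t).const_sub 1)
  have h2 := (h1.rpow_const (Or.inr hp)).const_mul (-(c d / ((d:ℝ) - 1)))
  refine h2.congr_deriv ?_
  have he : ((d:ℝ) - 1)/2 - 1 = ((d:ℝ) - 3)/2 := by ring
  rw [he]
  have hd1 : ((d:ℝ) - 1) ≠ 0 := by linarith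
  unfold rho
  field_simp

lemma moment {d : ℕ} (hd : 3 ≤ d) :
    ∫ t in (0:ℝ)..1, t * rho d t = c d / ((d:ℝ) - 1) := by
  have h3 : (3:ℝ) ≤ (d:ℝ) := by exact_mod_cast hd
  have hp0 : (((d:ℝ) - 1)/2) ≠ 0 := by
    intro h; linarith
  have hint : IntervalIntegrable (fun t => t * rho d t) volume 0 1 :=
    (continuous_id.mul (rho_cont hd)).intervalIntegrable 0 1
  rw [intervalIntegral.integral_eq_sub_of_hasDerivAt (fun t _ => v_hasDeriv hd t) hint]
  show -(c d / ((d:ℝ) - 1)) * (1 - 1^2) ^ (((d:ℝ) - 1)/2)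
      - -(c d / ((d:ℝ) - 1)) * (1 - 0^2) ^ (((d:ℝ) - 1)/2) = c d / ((d:ℝ) - 1)
  rw [show (1:ℝ) - 1^2 = 0 by norm_num, show (1:ℝ) - 0^2 = 1 by norm_num,
    Real.zero_rpow hp0, Real.one_rpow]
  ring

lemma c_succ {d : ℕ} (hd : 3 ≤ d) : c (d + 2) / (d:ℝ) = c d / ((d:ℝ) - 1) := by
  have h3 : (3:ℝ) ≤ (d:ℝ) := by exact_mod_cast hd
  have hg1 : 0 < Real.Gamma ((d:ℝ)/2) := Real.Gamma_pos_of_pos (by linarith)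
  have hg2 : 0 < Real.Gamma (((d:ℝ)-1)/2) := Real.Gamma_pos_of_pos (by linarith)
  have hpi : 0 < Real.sqrt π := Real.sqrt_pos.mpr Real.pi_pos
  unfold c
  push_cast
  rw [show ((d:ℝ) + 2)/2 = (d:ℝ)/2 + 1 by ring, show ((d:ℝ) + 2 - 1)/2 = ((d:ℝ)-1)/2 + 1 by ring,
    Real.Gamma_add_one (by positivity : ((d:ℝ)/2) ≠ 0),
    Real.Gamma_add_one (by intro h; nlinarith : (((d:ℝ)-1)/2) ≠ 0)]
  have hd0 : (d:ℝ) ≠ 0 := by positivity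
  have hd1 : ((d:ℝ) - 1) ≠ 0 := by intro h; nlinarith
  field_simp

theorem S_deriv_of_C2 (d : ℕ) (hd : 3 ≤ d) (f f' f'' : ℝ → ℝ)
    (hf : ∀ t ∈ Set.Icc (0:ℝ) 1, HasDerivWithinAt f (f' t) (Set.Icc (0:ℝ) 1) t)
    (hf' : ∀ t ∈ Set.Icc (0:ℝ) 1, HasDerivWithinAt f' (f'' t) (Set.Icc (0:ℝ) 1) t)
    (hf'' : ContinuousOn f'' (Set.Icc (0:ℝ) 1)) :
    ∃ G : ℝ → ℝ,
      (∀ s ∈ Set.Icc (0:ℝ) 1, HasDerivWithinAt (S d f) (G s) (Set.Icc (0:ℝ) 1) s) ∧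
      (∀ C : ℝ, (∀ t ∈ Set.Icc (0:ℝ) 1, |f' t| ≤ C) →
        ∀ s ∈ Set.Icc (0:ℝ) 1, |G s| ≤ c (d + 2) / d * C) ∧
      (f' 0 = 0 → ∀ s ∈ Set.Icc (0:ℝ) 1, G s = s / d * S (d + 2) f'' s) := by
  have h3 : (3:ℝ) ≤ (d:ℝ) := by exact_mod_cast hd
  have hd0 : (0:ℝ) < d := by linarith
  have hrho : Continuous (rho d) := rho_cont hd
  have hcf : ContinuousOn f (Icc 0 1) := fun x hx => (hf x hx).continuousWithinAt
  have hcf' : ContinuousOn f' (Icc 0 1) := fun x hx => (hf' x hx).continuousWithinAt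
  -- clamped version of f'
  set cl : ℝ → ℝ := fun x => max 0 (min 1 x) with hcl
  have hcl_mem : ∀ x, cl x ∈ Icc (0:ℝ) 1 :=
    fun x => ⟨le_max_left _ _, max_le zero_le_one (min_le_left _ _)⟩
  have hcl_eq : ∀ x ∈ Icc (0:ℝ) 1, cl x = x := fun x hx => by
    simp [hcl, min_eq_right hx.2, max_eq_right hx.1]
  have hcl_cont : Continuous cl := continuous_const.max (continuous_const.min continuous_id)
  set f'c : ℝ → ℝ := fun x => f' (cl x) with hf'cdef
  have hcont_f'c : Continuous f'c := hcf'.comp_continuous hcl_cont hcl_mem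
  set G : ℝ → ℝ := fun s => ∫ t in (0:ℝ)..1, t * f'c (t * s) * rho d t with hGdef
  have hFcont : Continuous (fun p : ℝ × ℝ => p.2 * f'c (p.2 * p.1) * rho d p.2) :=
    (continuous_snd.mul (hcont_f'c.comp (continuous_snd.mul continuous_fst))).mul
      (hrho.comp continuous_snd)
  have hGcont : Continuous G := by
    have := intervalIntegral.continuous_parametric_intervalIntegral_of_continuous'
      (μ := volume) (f := fun s t => t * f'c (t * s) * rho d t) hFcont 0 1
    exact this
  -- G s equals the "unclamped" integral for s ∈ Icc 0 1
  have hGs : ∀ s ∈ Icc (0:ℝ) 1, G s = ∫ t in (0:ℝ)..1, t * f' (t * s) * rho d t := by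
    intro s hs
    apply intervalIntegral.integral_congr
    intro t ht
    rw [uIcc_of_le zero_le_one] at ht
    simp only [hf'cdef]
    rw [hcl_eq _ (mul_mem_Icc01 ht hs)]
  -- key primitive identity
  have key : ∀ s ∈ Icc (0:ℝ) 1, (∫ u in (0:ℝ)..s, G u) = S d f s - S d f 0 := by
    intro s hs
    obtain ⟨hs0, hs1⟩ := hs
    -- inner FTC
    have inner : ∀ t ∈ Icc (0:ℝ) 1,
        (∫ u in (0:ℝ)..s, t * f'c (t * u) * rho d t)
          = f (t * s) * rho d t - f (t * 0) * rho d t := by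
      intro t ht
      have hmap : MapsTo (fun u : ℝ => t * u) (Icc 0 s) (Icc 0 1) := fun u hu =>
        mul_mem_Icc01 ht ⟨hu.1, le_trans hu.2 hs1⟩
      have hderiv : ∀ u ∈ Icc (0:ℝ) s, HasDerivWithinAt (fun u => f (t * u) * rho d t)
          (t * f' (t * u) * rho d t) (Icc 0 s) u := by
        intro u hu
        have h1 : HasDerivWithinAt (fun u : ℝ => t * u) t (Icc 0 s) u := by
          simpa using ((hasDerivAt_id u).const_mul t).hasDerivWithinAt
        have h2 := ((hf _ (hmap hu)).comp u h1 hmap).mul_const (rho d t)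
        refine h2.congr_deriv ?_
        ring
      have hcontw : ContinuousOn (fun u => f (t * u) * rho d t) (Icc 0 s) :=
        fun u hu => (hderiv u hu).continuousWithinAt
      have heq : EqOn (fun u => t * f'c (t * u) * rho d t)
          (fun u => t * f' (t * u) * rho d t) (uIcc (0:ℝ) s) := by
        intro u hu
        rw [uIcc_of_le hs0] at hu
        simp only [hf'cdef]
        rw [hcl_eq _ (hmap hu)]
      rw [intervalIntegral.integral_congr heq]
      have hint : IntervalIntegrable (fun u => t * f' (t * u) * rho d t) volume 0 s := by
        apply ContinuousOn.intervalIntegrable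
        rw [uIcc_of_le hs0]
        exact ((continuousOn_const.mul
          (hcf'.comp ((continuous_const.mul continuous_id).continuousOn) hmap)).mul
          continuousOn_const)
      have := intervalIntegral.integral_eq_sub_of_hasDeriv_right_of_le hs0 hcontw
        (fun u hu => (((hderiv u (Ioo_subset_Icc_self hu)).hasDerivAt
          (Icc_mem_nhds hu.1 hu.2)).hasDerivWithinAt)) hint
      simpa using this
    -- Fubini
    have hG_eq : ∀ u : ℝ, G u = ∫ t in Ioc (0:ℝ) 1, t * f'c (t * u) * rho d t := by
      intro u
      exact intervalIntegral.integral_of_le zero_le_one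
    have hUncurryCont : Continuous (Function.uncurry fun u t : ℝ => t * f'c (t * u) * rho d t) :=
      hFcont
    have hInt : Integrable (Function.uncurry fun u t : ℝ => t * f'c (t * u) * rho d t)
        ((volume.restrict (Ioc 0 s)).prod (volume.restrict (Ioc 0 1))) := by
      rw [Measure.prod_restrict]
      have h1 : IntegrableOn (Function.uncurry fun u t : ℝ => t * f'c (t * u) * rho d t)
          (Icc (0:ℝ) 1 ×ˢ Icc (0:ℝ) 1) (volume.prod volume) :=
        hUncurryCont.continuousOn.integrableOn_compact (isCompact_Icc.prod isCompact_Icc)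
      exact h1.mono_set (prod_mono (Ioc_subset_Icc_self.trans (Icc_subset_Icc le_rfl hs1))
        Ioc_subset_Icc_self)
    calc (∫ u in (0:ℝ)..s, G u)
        = ∫ u in Ioc (0:ℝ) s, ∫ t in Ioc (0:ℝ) 1, t * f'c (t * u) * rho d t := by
          rw [intervalIntegral.integral_of_le hs0]
          exact setIntegral_congr_fun measurableSet_Ioc (fun u _ => hG_eq u)
      _ = ∫ t in Ioc (0:ℝ) 1, ∫ u in Ioc (0:ℝ) s, t * f'c (t * u) * rho d t :=
          MeasureTheory.integral_integral_swap hInt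
      _ = ∫ t in Ioc (0:ℝ) 1, (f (t * s) * rho d t - f (t * 0) * rho d t) := by
          apply setIntegral_congr_fun measurableSet_Ioc
          intro t ht
          show (∫ u in Ioc (0:ℝ) s, t * f'c (t * u) * rho d t)
              = f (t * s) * rho d t - f (t * 0) * rho d t
          rw [← intervalIntegral.integral_of_le hs0]
          exact inner t (Ioc_subset_Icc_self ht)
      _ = S d f s - S d f 0 := by
          rw [← intervalIntegral.integral_of_le zero_le_one]
          have i1 : IntervalIntegrable (fun t => f (t * s) * rho d t) volume 0 1 := by
            apply ContinuousOn.intervalIntegrable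
            rw [uIcc_of_le zero_le_one]
            exact (hcf.comp ((continuous_mul_right s).continuousOn)
              (fun t ht => mul_mem_Icc01 ht ⟨hs0, hs1⟩)).mul hrho.continuousOn
          have i2 : IntervalIntegrable (fun t => f (t * 0) * rho d t) volume 0 1 := by
            apply ContinuousOn.intervalIntegrable
            rw [uIcc_of_le zero_le_one]
            exact (hcf.comp ((continuous_mul_right 0).continuousOn)
              (fun t ht => mul_mem_Icc01 ht ⟨le_rfl, zero_le_one⟩)).mul hrho.continuousOn
          rw [intervalIntegral.integral_sub i1 i2]
          rfl
  have hS_eq : ∀ x ∈ Icc (0:ℝ) 1, S d f x = S d f 0 + ∫ u in (0:ℝ)..x, G u := by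
    intro x hx
    rw [key x hx]; ring
  refine ⟨G, ?_, ?_, ?_⟩
  · -- derivative
    intro s hs
    have h1 : HasDerivAt (fun x => S d f 0 + ∫ u in (0:ℝ)..x, G u) (G s) s :=
      ((hGcont.integral_hasStrictDerivAt 0 s).hasDerivAt).const_add (S d f 0)
    exact (h1.hasDerivWithinAt).congr (fun y hy => hS_eq y hy) (hS_eq s hs)
  · -- bound
    intro C hC s hs
    rw [hGs s hs]
    have habs := intervalIntegral.abs_integral_le_integral_abs
      (f := fun t => t * f' (t * s) * rho d t) (μ := volume) zero_le_one
    have hcint : ContinuousOn (fun t => t * f' (t * s) * rho d t) (Icc (0:ℝ) 1) :=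
      (continuousOn_id.mul (hcf'.comp ((continuous_mul_right s).continuousOn)
        (fun t ht => mul_mem_Icc01 ht hs))).mul hrho.continuousOn
    have i1 : IntervalIntegrable (fun t => |t * f' (t * s) * rho d t|) volume 0 1 := by
      apply ContinuousOn.intervalIntegrable
      rw [uIcc_of_le zero_le_one]
      exact hcint.abs
    have i2 : IntervalIntegrable (fun t => C * (t * rho d t)) volume 0 1 :=
      (continuous_const.mul (continuous_id.mul hrho)).intervalIntegrable 0 1
    have hmono : (∫ t in (0:ℝ)..1, |t * f' (t * s) * rho d t|)
        ≤ ∫ t in (0:ℝ)..1, C * (t * rho d t) := by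
      apply intervalIntegral.integral_mono_on zero_le_one i1 i2
      intro t ht
      have h1 : |t * f' (t * s) * rho d t| = t * |f' (t * s)| * rho d t := by
        rw [abs_mul, abs_mul, abs_of_nonneg ht.1, abs_of_nonneg (rho_nonneg hd ht)]
      rw [h1]
      have hCle := hC (t * s) (mul_mem_Icc01 ht hs)
      calc t * |f' (t * s)| * rho d t ≤ t * C * rho d t :=
            mul_le_mul_of_nonneg_right (mul_le_mul_of_nonneg_left hCle ht.1)
              (rho_nonneg hd ht)
        _ = C * (t * rho d t) := by ring
    have hmoment : (∫ t in (0:ℝ)..1, C * (t * rho d t)) = C * (c d / ((d:ℝ) - 1)) := by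
      rw [intervalIntegral.integral_const_mul, moment hd]
    rw [c_succ hd]
    calc |∫ t in (0:ℝ)..1, t * f' (t * s) * rho d t| ≤ _ := habs
      _ ≤ C * (c d / ((d:ℝ) - 1)) := by rw [← hmoment]; exact hmono
      _ = c d / ((d:ℝ) - 1) * C := mul_comm _ _
  · -- integration by parts
    intro hf'0 s hs
    set p : ℝ := ((d:ℝ) - 1)/2 with hp
    have hp1 : 1 ≤ p := by rw [hp]; linarith
    set v : ℝ → ℝ := fun t => -(c d / ((d:ℝ) - 1)) * (1 - t^2) ^ p with hv
    have hvcont : Continuous v := by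
      exact continuous_const.mul
        ((continuous_const.sub (continuous_pow 2)).rpow_const (fun t => Or.inr (by linarith)))
    have hmap : MapsTo (fun t : ℝ => t * s) (Icc 0 1) (Icc 0 1) :=
      fun t ht => mul_mem_Icc01 ht hs
    have hcomp' : ContinuousOn (fun t => f' (t * s)) (Icc (0:ℝ) 1) :=
      hcf'.comp ((continuous_mul_right s).continuousOn) hmap
    have hcomp'' : ContinuousOn (fun t => f'' (t * s)) (Icc (0:ℝ) 1) :=
      hf''.comp ((continuous_mul_right s).continuousOn) hmap
    have hw : ∀ t ∈ Icc (0:ℝ) 1, HasDerivWithinAt (fun t => f' (t * s) * v t)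
        (s * f'' (t * s) * v t + f' (t * s) * (t * rho d t)) (Icc 0 1) t := by
      intro t ht
      have h1 : HasDerivWithinAt (fun t : ℝ => t * s) s (Icc 0 1) t :=
        (hasDerivAt_mul_const s).hasDerivWithinAt
      have h2 : HasDerivWithinAt (fun t => f' (t * s)) (f'' (t * s) * s) (Icc 0 1) t :=
        (hf' _ (hmap ht)).comp t h1 hmap
      have h3 := h2.mul (v_hasDeriv hd t).hasDerivWithinAt
      refine h3.congr_deriv ?_
      ring
    have hcontw : ContinuousOn (fun t => f' (t * s) * v t) (Icc (0:ℝ) 1) :=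
      hcomp'.mul hvcont.continuousOn
    have hintw : IntervalIntegrable
        (fun t => s * f'' (t * s) * v t + f' (t * s) * (t * rho d t)) volume 0 1 := by
      apply ContinuousOn.intervalIntegrable
      rw [uIcc_of_le zero_le_one]
      exact ((continuousOn_const.mul hcomp'').mul hvcont.continuousOn).add
        (hcomp'.mul (continuous_id.mul hrho).continuousOn)
    have hFTC : (∫ t in (0:ℝ)..1, (s * f'' (t * s) * v t + f' (t * s) * (t * rho d t)))
        = f' (1 * s) * v 1 - f' (0 * s) * v 0 :=
      intervalIntegral.integral_eq_sub_of_hasDeriv_right_of_le zero_le_one hcontw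
        (fun t htI => ((hw t (Ioo_subset_Icc_self htI)).hasDerivAt
          (Icc_mem_nhds htI.1 htI.2)).hasDerivWithinAt) hintw
    have hp0 : p ≠ 0 := by rw [hp]; intro h; linarith
    have hv1 : v 1 = 0 := by
      simp only [hv]
      rw [show (1:ℝ) - 1^2 = 0 by norm_num, Real.zero_rpow hp0, mul_zero]
    have hrhs : f' (1 * s) * v 1 - f' (0 * s) * v 0 = 0 := by
      rw [hv1, zero_mul, hf'0] at *
      simp [hf'0]
    have iA : IntervalIntegrable (fun t => s * f'' (t * s) * v t) volume 0 1 := by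
      apply ContinuousOn.intervalIntegrable
      rw [uIcc_of_le zero_le_one]
      exact (continuousOn_const.mul hcomp'').mul hvcont.continuousOn
    have iB : IntervalIntegrable (fun t => f' (t * s) * (t * rho d t)) volume 0 1 := by
      apply ContinuousOn.intervalIntegrable
      rw [uIcc_of_le zero_le_one]
      exact hcomp'.mul (continuous_id.mul hrho).continuousOn
    have hsplit : (∫ t in (0:ℝ)..1, s * f'' (t * s) * v t)
        + (∫ t in (0:ℝ)..1, f' (t * s) * (t * rho d t)) = 0 := by
      rw [← intervalIntegral.integral_add iA iB, hFTC, hrhs]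
    have hGB : G s = ∫ t in (0:ℝ)..1, f' (t * s) * (t * rho d t) := by
      rw [hGs s hs]
      apply intervalIntegral.integral_congr
      intro t _
      ring
    -- exponent cast for rho (d+2)
    have hexp : (((d + 2 : ℕ):ℝ) - 3)/2 = p := by
      push_cast; rw [hp]; ring
    have hcs : c d / ((d:ℝ) - 1) = c (d + 2) / (d:ℝ) := (c_succ hd).symm
    have hAeq : (∫ t in (0:ℝ)..1, s * f'' (t * s) * v t)
        = -(s / (d:ℝ) * S (d + 2) f'' s) := by
      unfold S
      rw [← intervalIntegral.integral_const_mul]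
      rw [← intervalIntegral.integral_neg]
      apply intervalIntegral.integral_congr
      intro t _
      simp only [hv, rho, hexp]
      rw [hcs]
      have : (d:ℝ) ≠ 0 := ne_of_gt hd0
      field_simp
    rw [hGB]
    have : (∫ t in (0:ℝ)..1, f' (t * s) * (t * rho d t))
        = -(∫ t in (0:ℝ)..1, s * f'' (t * s) * v t) := by linarith
    rw [this, hAeq, neg_neg]
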